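/- Let f, g : H → ℝ ∪ {∞} be closed, proper, convex functions on a real Hilbert space H, let γ > 0 and λ ∈ (0,1]. For z ∈ H, set x_g := prox_{γg}(z), x_f := prox_{γf}(2x_g − z), and z⁺ := (1−λ)z + λ·T_PRS(z). Then for every x in the intersection of the effective domains of f and g: 4γλ·(f(x_f) + g(x_g) − f(x) − g(x)) ≤ ‖z − x‖² − ‖z⁺ − x‖² + (1 − 1/λ)·‖z⁺ − z‖². -/

import Mathlib

open scoped RealInnerProductSpace

lemma prox_point_finite {H : Type*} [NormedAddCommGroup H] [InnerProductSpace ℝ H]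
    (φ : H → EReal) (hbot : ∀ x, φ x ≠ ⊥)
    (γ : ℝ) (p w y : H)
    (hmin : ∀ u : H, φ p + ((1 / (2 * γ) * ‖p - w‖ ^ 2 : ℝ) : EReal) ≤
        φ u + ((1 / (2 * γ) * ‖u - w‖ ^ 2 : ℝ) : EReal))
    (hy : φ y ≠ ⊤) : φ p ≠ ⊤ := by
  intro hp
  have h := hmin y
  rw [hp] at h
  have hyr : φ y = ((φ y).toReal : EReal) := (EReal.coe_toReal hy (hbot y)).symm
  rw [hyr, ← EReal.coe_add,
    EReal.top_add_of_ne_bot (EReal.coe_ne_bot (1 / (2 * γ) * ‖p - w‖ ^ 2))] at h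
  exact (EReal.coe_ne_top _) (top_le_iff.mp h)

lemma prox_subgrad {H : Type*} [NormedAddCommGroup H] [InnerProductSpace ℝ H]
    (φ : H → EReal) (hbot : ∀ x, φ x ≠ ⊥)
    (hconv : ∀ x y : H, ∀ a b : ℝ, 0 ≤ a → 0 ≤ b → a + b = 1 →
      φ (a • x + b • y) ≤ (a : EReal) * φ x + (b : EReal) * φ y)
    (γ : ℝ) (hγ : 0 < γ) (p w y : H)
    (hmin : ∀ u : H, φ p + ((1 / (2 * γ) * ‖p - w‖ ^ 2 : ℝ) : EReal) ≤
        φ u + ((1 / (2 * γ) * ‖u - w‖ ^ 2 : ℝ) : EReal))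
    (hy : φ y ≠ ⊤) :
    γ * ((φ p).toReal - (φ y).toReal) ≤ ⟪p - w, y - p⟫ := by
  have hp : φ p ≠ ⊤ := prox_point_finite φ hbot γ p w y hmin hy
  set P := (φ p).toReal with hP
  set Y := (φ y).toReal with hY
  have hpe : φ p = (P : EReal) := (EReal.coe_toReal hp (hbot p)).symm
  have hye : φ y = (Y : EReal) := (EReal.coe_toReal hy (hbot y)).symm
  set B := ‖y - p‖ ^ 2 with hB
  set I := ⟪p - w, y - p⟫ with hI
  have hBnn : 0 ≤ B := by positivity
  -- key step for each t ∈ (0,1]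
  have key : ∀ t : ℝ, 0 < t → t ≤ 1 → γ * (P - Y) ≤ I + (t / 2) * B := by
    intro t ht ht1
    have hcv := hconv p y (1 - t) t (by linarith) ht.le (by ring)
    have hmn := hmin ((1 - t) • p + t • y)
    rw [hpe] at hmn
    rw [hpe, hye, ← EReal.coe_mul, ← EReal.coe_mul, ← EReal.coe_add] at hcv
    have hc : φ ((1 - t) • p + t • y) + ((1 / (2 * γ) * ‖(1 - t) • p + t • y - w‖ ^ 2 : ℝ) : EReal)
        ≤ ((((1 - t) * P + t * Y) + 1 / (2 * γ) * ‖(1 - t) • p + t • y - w‖ ^ 2 : ℝ) : EReal) := by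
      rw [EReal.coe_add]
      exact add_le_add hcv (le_refl _)
    have h2 := le_trans hmn hc
    rw [← EReal.coe_add, EReal.coe_le_coe_iff] at h2
    have hnorm : (1 - t) • p + t • y - w = (p - w) + t • (y - p) := by
      module
    have hns : ‖(1 - t) • p + t • y - w‖ ^ 2 = ‖p - w‖ ^ 2 + 2 * t * I + t ^ 2 * B := by
      rw [hnorm, norm_add_sq_real, inner_smul_right, norm_smul]
      rw [hB, hI]
      simp [mul_pow, abs_of_pos ht]
      ring
    rw [hns] at h2
    -- h2 : P + c * ‖p-w‖² ≤ (1-t)P + tY + c * (‖p-w‖² + 2tI + t²B)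
    have hγ' : (0:ℝ) < 2 * γ := by linarith
    have h3 : t * (P - Y) ≤ 1 / (2 * γ) * (2 * t * I + t ^ 2 * B) := by nlinarith
    have h4 : t * (γ * (P - Y)) ≤ t * (I + (t/2) * B) := by
      have := mul_le_mul_of_nonneg_left h3 hγ.le
      calc t * (γ * (P - Y)) = γ * (t * (P - Y)) := by ring
        _ ≤ γ * (1 / (2 * γ) * (2 * t * I + t ^ 2 * B)) := this
        _ = t * (I + (t/2) * B) := by field_simp
    exact le_of_mul_le_mul_left (by linarith [h4]) ht |>.trans (le_refl _)
  -- limit t → 0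
  refine le_of_forall_pos_le_add ?_
  intro ε hε
  have htpos : 0 < min 1 (2 * ε / (B + 1)) := by positivity
  have h := key _ htpos (min_le_left _ _)
  have : min 1 (2 * ε / (B + 1)) / 2 * B ≤ ε := by
    have h1 : min 1 (2 * ε / (B + 1)) ≤ 2 * ε / (B + 1) := min_le_right _ _
    have hB1 : (0:ℝ) < B + 1 := by linarith
    have h2 : min 1 (2 * ε / (B + 1)) / 2 * B ≤ (2 * ε / (B + 1)) / 2 * B :=
      mul_le_mul_of_nonneg_right (by linarith) hBnn
    have h3 : (2 * ε / (B + 1)) / 2 * B ≤ ε := by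
      rw [div_div, div_mul_eq_mul_div, div_le_iff₀ (by positivity : (0:ℝ) < (B+1)*2)]
      nlinarith
    linarith
  linarith


/-- Proposition (upper fundamental inequality): for closed, proper, convex
`f, g : H → ℝ ∪ {∞}`, `γ > 0`, `λ ∈ (0,1]`, `z ∈ H`, `x_g = prox_{γg}(z)`,
`x_f = prox_{γf}(2x_g − z)` and `z⁺ = (1−λ)z + λ T_PRS(z)`, for every
`x ∈ dom f ∩ dom g`:
`4γλ (f(x_f) + g(x_g) − f(x) − g(x)) ≤ ‖z−x‖² − ‖z⁺−x‖² + (1 − 1/λ)‖z⁺−z‖²`. -/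
theorem prs_upper_fundamental_inequality
    {H : Type*} [NormedAddCommGroup H] [InnerProductSpace ℝ H] [CompleteSpace H]
    (f g : H → EReal)
    (hf_bot : ∀ x, f x ≠ ⊥) (hg_bot : ∀ x, g x ≠ ⊥)
    (hf_proper : ∃ x, f x ≠ ⊤) (hg_proper : ∃ x, g x ≠ ⊤)
    (hf_lsc : LowerSemicontinuous f) (hg_lsc : LowerSemicontinuous g)
    (hf_conv : ∀ x y : H, ∀ a b : ℝ, 0 ≤ a → 0 ≤ b → a + b = 1 →
      f (a • x + b • y) ≤ (a : EReal) * f x + (b : EReal) * f y)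
    (hg_conv : ∀ x y : H, ∀ a b : ℝ, 0 ≤ a → 0 ≤ b → a + b = 1 →
      g (a • x + b • y) ≤ (a : EReal) * g x + (b : EReal) * g y)
    (γ : ℝ) (hγ : 0 < γ)
    (proxf proxg : H → H)
    (hproxf : ∀ x p : H, proxf x = p ↔
      ∀ y : H, f p + ((1 / (2 * γ) * ‖p - x‖ ^ 2 : ℝ) : EReal) ≤
        f y + ((1 / (2 * γ) * ‖y - x‖ ^ 2 : ℝ) : EReal))
    (hproxg : ∀ x p : H, proxg x = p ↔
      ∀ y : H, g p + ((1 / (2 * γ) * ‖p - x‖ ^ 2 : ℝ) : EReal) ≤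
        g y + ((1 / (2 * γ) * ‖y - x‖ ^ 2 : ℝ) : EReal))
    (lam : ℝ) (hlam : lam ∈ Set.Ioc (0 : ℝ) 1)
    (z xg xf zp : H)
    (hxg : xg = proxg z)
    (hxf : xf = proxf ((2 : ℝ) • xg - z))
    (hzp : zp = (1 - lam) • z +
      lam • ((2 : ℝ) • proxf ((2 : ℝ) • proxg z - z) - ((2 : ℝ) • proxg z - z)))
    (x : H) (hx : f x ≠ ⊤) (hgx : g x ≠ ⊤) :
    ((4 * γ * lam : ℝ) : EReal) * (f xf + g xg - (f x + g x)) ≤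
      ((‖z - x‖ ^ 2 - ‖zp - x‖ ^ 2 + (1 - 1 / lam) * ‖zp - z‖ ^ 2 : ℝ) : EReal) := by
  obtain ⟨hlam0, hlam1⟩ := hlam
  -- prox minimization properties
  have Pg := (hproxg z xg).mp hxg.symm
  have Pf := (hproxf ((2 : ℝ) • xg - z) xf).mp hxf.symm
  -- finiteness
  have hGtop : g xg ≠ ⊤ := prox_point_finite g hg_bot γ xg z x Pg hgx
  have hFtop : f xf ≠ ⊤ := prox_point_finite f hf_bot γ xf ((2 : ℝ) • xg - z) x Pf hx
  -- subgradient inequalities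
  have hGsub := prox_subgrad g hg_bot hg_conv γ hγ xg z x Pg hgx
  have hFsub := prox_subgrad f hf_bot hf_conv γ hγ xf ((2 : ℝ) • xg - z) x Pf hx
  set F := (f xf).toReal
  set G := (g xg).toReal
  set Fx := (f x).toReal
  set Gx := (g x).toReal
  have hFe : f xf = (F : EReal) := (EReal.coe_toReal hFtop (hf_bot xf)).symm
  have hGe : g xg = (G : EReal) := (EReal.coe_toReal hGtop (hg_bot xg)).symm
  have hFxe : f x = (Fx : EReal) := (EReal.coe_toReal hx (hf_bot x)).symm
  have hGxe : g x = (Gx : EReal) := (EReal.coe_toReal hgx (hg_bot x)).symm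
  rw [hFe, hGe, hFxe, hGxe, ← EReal.coe_add, ← EReal.coe_add, ← EReal.coe_sub,
    ← EReal.coe_mul, EReal.coe_le_coe_iff]
  -- rewrite zp
  have hzp' : zp = z + (2 * lam) • (xf - xg) := by
    rw [hzp, ← hxg, ← hxf]
    module
  -- norm expansions
  have h1 : ‖zp - x‖ ^ 2 = ‖z - x‖ ^ 2 + 2 * (2 * lam) * ⟪z - x, xf - xg⟫
      + (2 * lam) ^ 2 * ‖xf - xg‖ ^ 2 := by
    have : zp - x = (z - x) + (2 * lam) • (xf - xg) := by rw [hzp']; module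
    rw [this, norm_add_sq_real, inner_smul_right, norm_smul]
    simp [mul_pow, sq_abs]
    ring
  have h2 : ‖zp - z‖ ^ 2 = (2 * lam) ^ 2 * ‖xf - xg‖ ^ 2 := by
    have : zp - z = (2 * lam) • (xf - xg) := by rw [hzp']; module
    rw [this, norm_smul, mul_pow, Real.norm_eq_abs, sq_abs]
  have hlaminv : (1 - 1 / lam) * ((2 * lam) ^ 2) = 4 * lam ^ 2 - 4 * lam := by
    field_simp
    ring
  -- inner product identity
  have hid : ⟪xf - ((2:ℝ) • xg - z), x - xf⟫ + ⟪xg - z, x - xg⟫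
      = -⟪z - x, xf - xg⟫ - ‖xf - xg‖ ^ 2 := by
    rw [← real_inner_self_eq_norm_sq]
    simp only [inner_sub_left, inner_sub_right, inner_smul_left, inner_smul_right,
      real_inner_comm x xf, real_inner_comm x xg, real_inner_comm z xf,
      real_inner_comm z xg, real_inner_comm xg xf, real_inner_comm x z, conj_trivial]
    ring
  have hs : γ * (F - Fx) + γ * (G - Gx) ≤ -⟪z - x, xf - xg⟫ - ‖xf - xg‖ ^ 2 := by
    rw [← hid]; linarith
  have h4 := mul_le_mul_of_nonneg_left hs (by linarith : (0:ℝ) ≤ 4 * lam)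
  calc 4 * γ * lam * (F + G - (Fx + Gx))
      = 4 * lam * (γ * (F - Fx) + γ * (G - Gx)) := by ring
    _ ≤ 4 * lam * (-⟪z - x, xf - xg⟫ - ‖xf - xg‖ ^ 2) := h4
    _ = ‖z - x‖ ^ 2 - ‖zp - x‖ ^ 2 + (1 - 1 / lam) * ‖zp - z‖ ^ 2 := by
        rw [h1, h2]
        field_simp
        ring
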